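/- With K, ξ, η as in the coordinate setup (vertices (1+α,1+β), (−1−α,1−β), (−1+α,−1+β), (1−α,−1−β) in the (ξ,η)-coordinates induced by r, s with r × s > 0, |α|+|β|<1), one has ∫_K ξ² dx = (4/3)(1+α²)(r × s), ∫_K ξη dx = (4/3)αβ (r × s), and ∫_K η² dx = (4/3)(1+β²)(r × s). -/

import Mathlib

open MeasureTheory

/-- The planar cross product `r × s = r₁s₂ - r₂s₁`. -/
def cross2 (u v : ℝ × ℝ) : ℝ := u.1 * v.2 - u.2 * v.1

/-- The convex quadrilateral with vertices
`A1 = (1+α)r + (1+β)s`, `A2 = -(1+α)r + (1-β)s`,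
`A3 = (-1+α)r + (-1+β)s`, `A4 = (1-α)r - (1+β)s`. -/
def quadK (α β : ℝ) (r s : ℝ × ℝ) : Set (ℝ × ℝ) :=
  convexHull ℝ {(1 + α) • r + (1 + β) • s, (-(1 + α)) • r + (1 - β) • s,
    (-1 + α) • r + (-1 + β) • s, (1 - α) • r + (-(1 + β)) • s}

/-- The linear coordinate `ξ` defined by `ξ(a r + b s) = a`. -/
noncomputable def xiCoord (r s : ℝ × ℝ) (x : ℝ × ℝ) : ℝ := cross2 x s / cross2 r s

/-- The linear coordinate `η` defined by `η(a r + b s) = b`. -/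
noncomputable def etaCoord (r s : ℝ × ℝ) (x : ℝ × ℝ) : ℝ := cross2 r x / cross2 r s

namespace QuadAux
variable {α β : ℝ} {r s : ℝ × ℝ}

def G (α β : ℝ) (r s : ℝ × ℝ) (p : ℝ × ℝ) : ℝ × ℝ :=
  (p.1 + α * (p.1 * p.2)) • r + (p.2 + β * (p.1 * p.2)) • s

def Sq : Set (ℝ × ℝ) := Set.Icc (-1:ℝ) 1 ×ˢ Set.Icc (-1:ℝ) 1

lemma mem_Sq {p : ℝ × ℝ} : p ∈ Sq ↔ (-1 ≤ p.1 ∧ p.1 ≤ 1) ∧ (-1 ≤ p.2 ∧ p.2 ≤ 1) := by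
  constructor <;> · intro h; simp only [Sq, Set.mem_prod, Set.mem_Icc] at *; tauto

lemma xi_comb (hc : cross2 r s ≠ 0) (a b : ℝ) : xiCoord r s (a • r + b • s) = a := by
  unfold xiCoord cross2 at *
  simp only [Prod.fst_add, Prod.snd_add, Prod.smul_fst, Prod.smul_snd, smul_eq_mul]
  rw [div_eq_iff hc]; ring

lemma eta_comb (hc : cross2 r s ≠ 0) (a b : ℝ) : etaCoord r s (a • r + b • s) = b := by
  unfold etaCoord cross2 at *
  simp only [Prod.fst_add, Prod.snd_add, Prod.smul_fst, Prod.smul_snd, smul_eq_mul]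
  field_simp; ring

lemma repr_eq (hc : cross2 r s ≠ 0) (p : ℝ × ℝ) :
    xiCoord r s p • r + etaCoord r s p • s = p := by
  unfold xiCoord etaCoord cross2 at *
  apply Prod.ext <;>
  · simp only [Prod.fst_add, Prod.snd_add, Prod.smul_fst, Prod.smul_snd, smul_eq_mul]
    rw [div_mul_eq_mul_div, div_mul_eq_mul_div, ← add_div, div_eq_iff hc]; ring

lemma xi_linear (a b : ℝ) (p q : ℝ × ℝ) :
    xiCoord r s (a • p + b • q) = a * xiCoord r s p + b * xiCoord r s q := by
  unfold xiCoord cross2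
  simp only [Prod.fst_add, Prod.snd_add, Prod.smul_fst, Prod.smul_snd, smul_eq_mul]
  ring

lemma eta_linear (a b : ℝ) (p q : ℝ × ℝ) :
    etaCoord r s (a • p + b • q) = a * etaCoord r s p + b * etaCoord r s q := by
  unfold etaCoord cross2
  simp only [Prod.fst_add, Prod.snd_add, Prod.smul_fst, Prod.smul_snd, smul_eq_mul]
  ring

lemma xi_G (hc : cross2 r s ≠ 0) (p : ℝ × ℝ) :
    xiCoord r s (G α β r s p) = p.1 + α * (p.1 * p.2) := xi_comb hc _ _

lemma eta_G (hc : cross2 r s ≠ 0) (p : ℝ × ℝ) :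
    etaCoord r s (G α β r s p) = p.2 + β * (p.1 * p.2) := eta_comb hc _ _

section Inj
variable (hc : cross2 r s ≠ 0) (hconv : |α| + |β| < 1)

lemma abs_prod_le_one {u v : ℝ} (h1 : -1 ≤ u) (h2 : u ≤ 1) (h3 : -1 ≤ v) (h4 : v ≤ 1) :
    |u * v| ≤ 1 := by
  rw [abs_mul]
  have := abs_le.mpr ⟨h1, h2⟩
  have := abs_le.mpr ⟨h3, h4⟩
  nlinarith [abs_nonneg u, abs_nonneg v]

include hc hconv in
lemma injOn_G : Set.InjOn (G α β r s) Sq := by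
  intro p hp q hq h
  obtain ⟨⟨hp1, hp2⟩, hp3, hp4⟩ := mem_Sq.mp hp
  obtain ⟨⟨hq1, hq2⟩, hq3, hq4⟩ := mem_Sq.mp hq
  have e1 : p.1 + α * (p.1 * p.2) = q.1 + α * (q.1 * q.2) := by
    have := congrArg (xiCoord r s) h
    rwa [xi_G hc, xi_G hc] at this
  have e2 : p.2 + β * (p.1 * p.2) = q.2 + β * (q.1 * q.2) := by
    have := congrArg (etaCoord r s) h
    rwa [eta_G hc, eta_G hc] at this
  have key : (p.1 * p.2 - q.1 * q.2) *
      ((1 + β * p.1) * (1 + α * p.2) - α * β * (q.1 * q.2)) = 0 := by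
    linear_combination (q.2 : ℝ) * e1 + (p.1 + α * (p.1 * p.2 - q.1 * q.2)) * e2
  have hbu : 1 - |β| ≤ 1 + β * p.1 := by
    have : |β * p.1| ≤ |β| := by
      rw [abs_mul]
      nlinarith [abs_le.mpr ⟨hp1, hp2⟩, abs_nonneg β]
    linarith [neg_abs_le (β * p.1)]
  have hav : 1 - |α| ≤ 1 + α * p.2 := by
    have : |α * p.2| ≤ |α| := by
      rw [abs_mul]
      nlinarith [abs_le.mpr ⟨hp3, hp4⟩, abs_nonneg α]
    linarith [neg_abs_le (α * p.2)]
  have habq : α * β * (q.1 * q.2) ≤ |α| * |β| := by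
    calc α * β * (q.1 * q.2) ≤ |α * β * (q.1 * q.2)| := le_abs_self _
    _ = |α| * |β| * |q.1 * q.2| := by rw [abs_mul, abs_mul]
    _ ≤ |α| * |β| * 1 := by
        have := abs_prod_le_one hq1 hq2 hq3 hq4
        have := mul_nonneg (abs_nonneg α) (abs_nonneg β)
        nlinarith
    _ = |α| * |β| := mul_one _
  have hpos : 0 < (1 + β * p.1) * (1 + α * p.2) - α * β * (q.1 * q.2) := by
    have h1 : (1 - |β|) * (1 - |α|) ≤ (1 + β * p.1) * (1 + α * p.2) := by
      apply mul_le_mul hbu hav (by linarith [abs_nonneg β]) (by linarith [abs_nonneg α])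
    nlinarith [abs_nonneg α, abs_nonneg β]
  have hd0 : p.1 * p.2 - q.1 * q.2 = 0 := by
    rcases mul_eq_zero.mp key with h' | h'
    · exact h'
    · linarith
  have hpq : p.1 * p.2 = q.1 * q.2 := by linarith
  rw [hpq] at e1 e2
  exact Prod.ext (by linarith) (by linarith)
end Inj


def Hset (α β : ℝ) (r s : ℝ × ℝ) : Set (ℝ × ℝ) :=
  {p | (1+α) * etaCoord r s p - β * xiCoord r s p ≤ 1+α ∧
       (1+β) * xiCoord r s p - α * etaCoord r s p ≤ 1+β ∧
       -(1-α) ≤ (1-α) * etaCoord r s p + β * xiCoord r s p ∧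
       -(1-β) ≤ (1-β) * xiCoord r s p + α * etaCoord r s p}

lemma convex_Hset : Convex ℝ (Hset α β r s) := by
  intro p hp q hq a b ha hb hab
  simp only [Hset, Set.mem_setOf_eq] at hp hq ⊢
  obtain ⟨h1, h2, h3, h4⟩ := hp
  obtain ⟨k1, k2, k3, k4⟩ := hq
  obtain rfl : b = 1 - a := by linarith
  rw [xi_linear, eta_linear]
  refine ⟨?_, ?_, ?_, ?_⟩
  · nlinarith [mul_le_mul_of_nonneg_left h1 ha, mul_le_mul_of_nonneg_left k1 hb]
  · nlinarith [mul_le_mul_of_nonneg_left h2 ha, mul_le_mul_of_nonneg_left k2 hb]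
  · nlinarith [mul_le_mul_of_nonneg_left h3 ha, mul_le_mul_of_nonneg_left k3 hb]
  · nlinarith [mul_le_mul_of_nonneg_left h4 ha, mul_le_mul_of_nonneg_left k4 hb]

lemma quadK_subset_Hset (hc : cross2 r s ≠ 0) (hconv : |α| + |β| < 1) :
    quadK α β r s ⊆ Hset α β r s := by
  have hα2 : α < 1 := by linarith [le_abs_self α, abs_nonneg β]
  have hα1 : -1 < α := by linarith [neg_abs_le α, abs_nonneg β]
  have hβ2 : β < 1 := by linarith [le_abs_self β, abs_nonneg α]
  have hβ1 : -1 < β := by linarith [neg_abs_le β, abs_nonneg α]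
  have hab1 : α + β < 1 := by linarith [le_abs_self α, le_abs_self β]
  have hab2 : -1 < α + β := by linarith [neg_abs_le α, neg_abs_le β]
  have hab3 : α - β < 1 := by linarith [le_abs_self α, neg_abs_le β]
  have hab4 : -1 < α - β := by linarith [neg_abs_le α, le_abs_self β]
  apply convexHull_min _ convex_Hset
  intro w hw
  simp only [Set.mem_insert_iff, Set.mem_singleton_iff] at hw
  rcases hw with h | h | h | h <;>
  · subst h
    refine ⟨?_, ?_, ?_, ?_⟩ <;>
    · rw [xi_comb hc, eta_comb hc]
      nlinarith

lemma G_Sq_subset (p : ℝ × ℝ) (hp : p ∈ Sq) : G α β r s p ∈ quadK α β r s := by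
  obtain ⟨⟨h1, h2⟩, h3, h4⟩ := mem_Sq.mp hp
  unfold quadK
  set A : ℝ × ℝ := (1 + α) • r + (1 + β) • s with hA
  set B : ℝ × ℝ := (-(1 + α)) • r + (1 - β) • s with hB
  set C : ℝ × ℝ := (-1 + α) • r + (-1 + β) • s with hC
  set D : ℝ × ℝ := (1 - α) • r + (-(1 + β)) • s with hD
  have hAm : A ∈ convexHull ℝ ({A, B, C, D} : Set (ℝ × ℝ)) :=
    subset_convexHull ℝ _ (Set.mem_insert _ _)
  have hBm : B ∈ convexHull ℝ ({A, B, C, D} : Set (ℝ × ℝ)) :=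
    subset_convexHull ℝ _ (Set.mem_insert_of_mem _ (Set.mem_insert _ _))
  have hCm : C ∈ convexHull ℝ ({A, B, C, D} : Set (ℝ × ℝ)) :=
    subset_convexHull ℝ _ (Set.mem_insert_of_mem _ (Set.mem_insert_of_mem _ (Set.mem_insert _ _)))
  have hDm : D ∈ convexHull ℝ ({A, B, C, D} : Set (ℝ × ℝ)) :=
    subset_convexHull ℝ _
      (Set.mem_insert_of_mem _ (Set.mem_insert_of_mem _ (Set.mem_insert_of_mem _ rfl)))
  have htop : G α β r s (p.1, 1) ∈ convexHull ℝ ({A, B, C, D} : Set (ℝ × ℝ)) := by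
    apply (convex_convexHull ℝ _).segment_subset hAm hBm
    refine ⟨(1 + p.1) / 2, (1 - p.1) / 2, by linarith, by linarith, by ring, ?_⟩
    rw [hA, hB]
    apply Prod.ext <;>
    · simp only [G, Prod.fst_add, Prod.snd_add, Prod.smul_fst, Prod.smul_snd, smul_eq_mul]
      ring
  have hbot : G α β r s (p.1, -1) ∈ convexHull ℝ ({A, B, C, D} : Set (ℝ × ℝ)) := by
    apply (convex_convexHull ℝ _).segment_subset hDm hCm
    refine ⟨(1 + p.1) / 2, (1 - p.1) / 2, by linarith, by linarith, by ring, ?_⟩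
    rw [hD, hC]
    apply Prod.ext <;>
    · simp only [G, Prod.fst_add, Prod.snd_add, Prod.smul_fst, Prod.smul_snd, smul_eq_mul]
      ring
  apply (convex_convexHull ℝ _).segment_subset htop hbot
  refine ⟨(1 + p.2) / 2, (1 - p.2) / 2, by linarith, by linarith, by ring, ?_⟩
  apply Prod.ext <;>
  · simp only [G, Prod.fst_add, Prod.snd_add, Prod.smul_fst, Prod.smul_snd, smul_eq_mul]
    ring

lemma Hset_subset_image (hc : cross2 r s ≠ 0) (hconv : |α| + |β| < 1) :
    Hset α β r s ⊆ G α β r s '' Sq := by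
  intro p hp
  simp only [Hset, Set.mem_setOf_eq] at hp
  set x := xiCoord r s p with hx0
  set y := etaCoord r s p with hy0
  obtain ⟨h1, h2, h3, h4⟩ := hp
  have hα2 : α < 1 := by linarith [le_abs_self α, abs_nonneg β]
  have hα1 : -1 < α := by linarith [neg_abs_le α, abs_nonneg β]
  have hβ2 : β < 1 := by linarith [le_abs_self β, abs_nonneg α]
  have hβ1 : -1 < β := by linarith [neg_abs_le β, abs_nonneg α]
  set f : ℝ → ℝ := fun v => (v * (1 + α * v) + β * x * v) / (1 + α * v) with hf
  have hden : ∀ v ∈ Set.Icc (-1:ℝ) 1, (0:ℝ) < 1 + α * v := by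
    intro v hv
    obtain ⟨hv1, hv2⟩ := Set.mem_Icc.mp hv
    have habs : |α * v| ≤ |α| := by
      rw [abs_mul]
      nlinarith [abs_le.mpr ⟨hv1, hv2⟩, abs_nonneg α]
    have := neg_abs_le (α * v)
    linarith [abs_nonneg β]
  have hcont : ContinuousOn f (Set.Icc (-1:ℝ) 1) := by
    apply ContinuousOn.div (Continuous.continuousOn (by continuity))
      (Continuous.continuousOn (by continuity))
    intro v hv
    exact ne_of_gt (hden v hv)
  have hres : Set.Icc (f (-1)) (f 1) ⊆ f '' Set.Icc (-1:ℝ) 1 :=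
    intermediate_value_Icc (by norm_num) hcont
  have hy1 : f (-1) ≤ y := by
    have e : f (-1) = (-(1 - α) - β * x) / (1 - α) := by
      simp only [hf]; ring
    rw [e, div_le_iff₀ (by linarith)]
    nlinarith [h3]
  have hy2 : y ≤ f 1 := by
    have e : f 1 = ((1 + α) + β * x) / (1 + α) := by
      simp only [hf]; ring
    rw [e, le_div_iff₀ (by linarith)]
    nlinarith [h1]
  obtain ⟨v, hv, hveq⟩ := hres ⟨hy1, hy2⟩
  obtain ⟨hv1, hv2⟩ := Set.mem_Icc.mp hv
  have hdv : 0 < 1 + α * v := hden v hv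
  have habsav : |α * v| ≤ |α| := by
    rw [abs_mul]
    nlinarith [abs_le.mpr ⟨hv1, hv2⟩, abs_nonneg α]
  set u := x / (1 + α * v) with hu
  have hxu : u * (1 + α * v) = x := by rw [hu]; field_simp
  have hxeq : x = u + α * (u * v) := by rw [← hxu]; ring
  have h0 : y * (1 + α * v) = v * (1 + α * v) + β * x * v := by
    rw [← hveq, hf]
    beta_reduce
    exact div_mul_cancel₀ _ hdv.ne'
  have hyeq : y = v + β * (u * v) := by
    have hz : (y - (v + β * (u * v))) * (1 + α * v) = 0 := by
      linear_combination h0 - β * v * hxu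
    rcases mul_eq_zero.mp hz with h' | h'
    · linarith
    · linarith
  have hpos2 : 0 < (1 + β) + α * v := by
    have := neg_abs_le (α * v)
    linarith [neg_abs_le β, le_abs_self β]
  have hpos3 : 0 < (1 - β) + α * v := by
    have := neg_abs_le (α * v)
    linarith [le_abs_self β]
  have hu2 : u ≤ 1 := by
    have hid : (1 + β) * x - α * y - (1 + β) = (u - 1) * ((1 + β) + α * v) := by
      rw [hxeq, hyeq]; ring
    nlinarith [h2, hpos2]
  have hu1 : -1 ≤ u := by
    have hid : (1 - β) * x + α * y + (1 - β) = (u + 1) * ((1 - β) + α * v) := by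
      rw [hxeq, hyeq]; ring
    nlinarith [h4, hpos3]
  refine ⟨(u, v), mem_Sq.mpr ⟨⟨hu1, hu2⟩, hv1, hv2⟩, ?_⟩
  show (u + α * (u * v)) • r + (v + β * (u * v)) • s = p
  rw [← hxeq, ← hyeq, hx0, hy0]
  exact repr_eq hc p

lemma quadK_eq_image (hc : cross2 r s ≠ 0) (hconv : |α| + |β| < 1) :
    quadK α β r s = G α β r s '' Sq := by
  apply Set.Subset.antisymm
  · exact fun p hp => Hset_subset_image hc hconv (quadK_subset_Hset hc hconv hp)
  · rintro _ ⟨p, hp, rfl⟩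
    exact G_Sq_subset p hp


noncomputable def Dm (α β : ℝ) (r s : ℝ × ℝ) (p : ℝ × ℝ) : ℝ × ℝ →L[ℝ] ℝ × ℝ :=
  ((ContinuousLinearMap.fst ℝ ℝ ℝ +
    α • (p.1 • ContinuousLinearMap.snd ℝ ℝ ℝ + p.2 • ContinuousLinearMap.fst ℝ ℝ ℝ)).smulRight r)
  + ((ContinuousLinearMap.snd ℝ ℝ ℝ +
    β • (p.1 • ContinuousLinearMap.snd ℝ ℝ ℝ + p.2 • ContinuousLinearMap.fst ℝ ℝ ℝ)).smulRight s)

lemma hasFDerivAt_G (p : ℝ × ℝ) : HasFDerivAt (G α β r s) (Dm α β r s p) p := by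
  have hmul : HasFDerivAt (fun q : ℝ × ℝ => q.1 * q.2)
      (p.1 • ContinuousLinearMap.snd ℝ ℝ ℝ + p.2 • ContinuousLinearMap.fst ℝ ℝ ℝ) p :=
    (hasFDerivAt_fst (p := p)).mul (hasFDerivAt_snd (p := p))
  have c1 : HasFDerivAt (fun q : ℝ × ℝ => q.1 + α * (q.1 * q.2))
      (ContinuousLinearMap.fst ℝ ℝ ℝ +
        α • (p.1 • ContinuousLinearMap.snd ℝ ℝ ℝ + p.2 • ContinuousLinearMap.fst ℝ ℝ ℝ)) p :=
    (hasFDerivAt_fst (p := p)).add (hmul.const_mul α)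
  have c2 : HasFDerivAt (fun q : ℝ × ℝ => q.2 + β * (q.1 * q.2))
      (ContinuousLinearMap.snd ℝ ℝ ℝ +
        β • (p.1 • ContinuousLinearMap.snd ℝ ℝ ℝ + p.2 • ContinuousLinearMap.fst ℝ ℝ ℝ)) p :=
    (hasFDerivAt_snd (p := p)).add (hmul.const_mul β)
  exact (c1.smul_const r).add (c2.smul_const s)

lemma det_Dm (p : ℝ × ℝ) : (Dm α β r s p).det = (1 + β * p.1 + α * p.2) * cross2 r s := by
  have h : (Dm α β r s p).det
      = Matrix.det (LinearMap.toMatrix (Module.Basis.finTwoProd ℝ) (Module.Basis.finTwoProd ℝ)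
          (Dm α β r s p : ℝ × ℝ →ₗ[ℝ] ℝ × ℝ)) := by
    rw [LinearMap.det_toMatrix]
  rw [h, Matrix.det_fin_two]
  simp [LinearMap.toMatrix_apply, Module.Basis.coe_finTwoProd_repr, Module.Basis.finTwoProd_zero,
    Module.Basis.finTwoProd_one, Dm, cross2]
  ring

lemma measurableSet_Sq : MeasurableSet Sq :=
  measurableSet_Icc.prod measurableSet_Icc

lemma cov (hc : 0 < cross2 r s) (hconv : |α| + |β| < 1) (g : ℝ × ℝ → ℝ) :
    (∫ x in quadK α β r s, g x) =
      ∫ p in Sq, ((1 + β * p.1 + α * p.2) * cross2 r s) * g (G α β r s p) := by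
  rw [quadK_eq_image hc.ne' hconv,
    integral_image_eq_integral_abs_det_fderiv_smul volume measurableSet_Sq
      (fun p _ => (hasFDerivAt_G p).hasFDerivWithinAt) (injOn_G hc.ne' hconv)]
  apply setIntegral_congr_fun measurableSet_Sq
  intro p hp
  obtain ⟨⟨h1, h2⟩, h3, h4⟩ := mem_Sq.mp hp
  have hα2 : α < 1 := by linarith [le_abs_self α, abs_nonneg β]
  have hα1 : -1 < α := by linarith [neg_abs_le α, abs_nonneg β]
  have hβ2 : β < 1 := by linarith [le_abs_self β, abs_nonneg α]
  have hβ1 : -1 < β := by linarith [neg_abs_le β, abs_nonneg α]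
  have hbp : |β * p.1| ≤ |β| := by
    rw [abs_mul]; nlinarith [abs_le.mpr ⟨h1, h2⟩, abs_nonneg β]
  have hap : |α * p.2| ≤ |α| := by
    rw [abs_mul]; nlinarith [abs_le.mpr ⟨h3, h4⟩, abs_nonneg α]
  have hpos : 0 < 1 + β * p.1 + α * p.2 := by
    linarith [neg_abs_le (β * p.1), neg_abs_le (α * p.2)]
  simp only [det_Dm, smul_eq_mul]
  rw [abs_of_pos (by positivity)]

lemma cubic_int (c0 c1 c2 c3 : ℝ) :
    (∫ t in (-1:ℝ)..1, (c0 + c1 * t + c2 * t ^ 2 + c3 * t ^ 3)) = 2 * c0 + 2 / 3 * c2 := by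
  have i0 : IntervalIntegrable (fun _ : ℝ => c0) volume (-1) 1 := intervalIntegrable_const
  have i1 : IntervalIntegrable (fun t : ℝ => c1 * t) volume (-1) 1 :=
    (continuous_const.mul continuous_id).intervalIntegrable _ _
  have i2 : IntervalIntegrable (fun t : ℝ => c2 * t ^ 2) volume (-1) 1 :=
    (continuous_const.mul (continuous_pow 2)).intervalIntegrable _ _
  have i3 : IntervalIntegrable (fun t : ℝ => c3 * t ^ 3) volume (-1) 1 :=
    (continuous_const.mul (continuous_pow 3)).intervalIntegrable _ _
  rw [intervalIntegral.integral_add ((i0.add i1).add i2) i3,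
    intervalIntegral.integral_add (i0.add i1) i2,
    intervalIntegral.integral_add i0 i1,
    intervalIntegral.integral_const, intervalIntegral.integral_const_mul,
    intervalIntegral.integral_const_mul, intervalIntegral.integral_const_mul,
    integral_id, integral_pow, integral_pow]
  norm_num
  ring

lemma icc_to_interval (g : ℝ → ℝ) :
    (∫ t in Set.Icc (-1:ℝ) 1, g t) = ∫ t in (-1:ℝ)..1, g t := by
  rw [intervalIntegral.integral_of_le (by norm_num : (-1:ℝ) ≤ 1),
    integral_Icc_eq_integral_Ioc]

lemma sq_integral_eq (f : ℝ × ℝ → ℝ) (hf : Continuous f) :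
    (∫ p in Sq, f p) = ∫ u in (-1:ℝ)..1, ∫ v in (-1:ℝ)..1, f (u, v) := by
  have hint : IntegrableOn f (Set.Icc (-1:ℝ) 1 ×ˢ Set.Icc (-1:ℝ) 1)
      ((volume : Measure ℝ).prod (volume : Measure ℝ)) := by
    rw [← Measure.volume_eq_prod]
    exact hf.continuousOn.integrableOn_compact (isCompact_Icc.prod isCompact_Icc)
  have h := setIntegral_prod f hint
  rw [show Sq = Set.Icc (-1:ℝ) 1 ×ˢ Set.Icc (-1:ℝ) 1 from rfl, Measure.volume_eq_prod, h,
    icc_to_interval]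
  congr 1
  funext u
  exact icc_to_interval _

end QuadAux

open QuadAux

/-- `∫_K ξ² = (4/3)(1+α²)(r×s)`, `∫_K ξη = (4/3)αβ(r×s)`,
`∫_K η² = (4/3)(1+β²)(r×s)`. -/
theorem stmt_6 (α β : ℝ) (r s : ℝ × ℝ) (hc : 0 < cross2 r s) (hconv : |α| + |β| < 1) :
    (∫ x in quadK α β r s, (xiCoord r s x) ^ 2) = 4 / 3 * (1 + α ^ 2) * cross2 r s ∧
    (∫ x in quadK α β r s, xiCoord r s x * etaCoord r s x) = 4 / 3 * (α * β) * cross2 r s ∧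
    (∫ x in quadK α β r s, (etaCoord r s x) ^ 2) = 4 / 3 * (1 + β ^ 2) * cross2 r s := by
  set c := cross2 r s with hcc
  refine ⟨?_, ?_, ?_⟩
  · rw [cov hc hconv]
    simp only [xi_G hc.ne']
    rw [sq_integral_eq _ (by fun_prop)]
    simp only []
    have inner : ∀ u : ℝ,
        (∫ v in (-1:ℝ)..1, (1 + β * u + α * v) * c * (u + α * (u * v)) ^ 2)
        = 2 * (c * (u ^ 2 * (1 + β * u))) + 2 / 3 * (c * (u ^ 2 * (α ^ 2 * (1 + β * u) + 2 * α ^ 2))) := by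
      intro u
      rw [show (fun v : ℝ => (1 + β * u + α * v) * c * (u + α * (u * v)) ^ 2)
          = fun v : ℝ => (c * (u ^ 2 * (1 + β * u))) + (c * (u ^ 2 * (2 * α * (1 + β * u) + α))) * v
            + (c * (u ^ 2 * (α ^ 2 * (1 + β * u) + 2 * α ^ 2))) * v ^ 2 + (c * (u ^ 2 * α ^ 3)) * v ^ 3
          from funext fun v => by ring]
      exact cubic_int _ _ _ _
    simp_rw [← hcc, inner]
    rw [show (fun u : ℝ => 2 * (c * (u ^ 2 * (1 + β * u))) + 2 / 3 * (c * (u ^ 2 * (α ^ 2 * (1 + β * u) + 2 * α ^ 2))))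
        = fun u : ℝ => 0 + 0 * u + (2 * c + 2 * c * α ^ 2) * u ^ 2 + (2 * c * β + 2 / 3 * c * α ^ 2 * β) * u ^ 3
        from funext fun u => by ring, cubic_int]
    ring
  · rw [cov hc hconv]
    simp only [xi_G hc.ne', eta_G hc.ne']
    rw [sq_integral_eq _ (by fun_prop)]
    simp only []
    have inner : ∀ u : ℝ,
        (∫ v in (-1:ℝ)..1, (1 + β * u + α * v) * c * ((u + α * (u * v)) * (v + β * (u * v))))
        = 2 / 3 * (c * (u * (1 + β * u) * (α * (2 + β * u)))) := by
      intro u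
      rw [show (fun v : ℝ => (1 + β * u + α * v) * c * ((u + α * (u * v)) * (v + β * (u * v))))
          = fun v : ℝ => 0 + (c * (u * (1 + β * u) * (1 + β * u))) * v
            + (c * (u * (1 + β * u) * (α * (2 + β * u)))) * v ^ 2 + (c * (u * (1 + β * u) * α ^ 2)) * v ^ 3
          from funext fun v => by ring, cubic_int]
      ring
    simp_rw [← hcc, inner]
    rw [show (fun u : ℝ => 2 / 3 * (c * (u * (1 + β * u) * (α * (2 + β * u)))))
        = fun u : ℝ => 0 + (4 / 3 * c * α) * u + (2 * c * α * β) * u ^ 2 + (2 / 3 * c * α * β ^ 2) * u ^ 3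
        from funext fun u => by ring, cubic_int]
    ring
  · rw [cov hc hconv]
    simp only [eta_G hc.ne']
    rw [sq_integral_eq _ (by fun_prop)]
    simp only []
    have inner : ∀ u : ℝ,
        (∫ v in (-1:ℝ)..1, (1 + β * u + α * v) * c * (v + β * (u * v)) ^ 2)
        = 2 / 3 * (c * (1 + β * u) ^ 3) := by
      intro u
      rw [show (fun v : ℝ => (1 + β * u + α * v) * c * (v + β * (u * v)) ^ 2)
          = fun v : ℝ => 0 + 0 * v + (c * (1 + β * u) ^ 3) * v ^ 2 + (c * α * (1 + β * u) ^ 2) * v ^ 3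
          from funext fun v => by ring, cubic_int]
      ring
    simp_rw [← hcc, inner]
    rw [show (fun u : ℝ => 2 / 3 * (c * (1 + β * u) ^ 3))
        = fun u : ℝ => 2 / 3 * c + (2 * c * β) * u + (2 * c * β ^ 2) * u ^ 2 + (2 / 3 * c * β ^ 3) * u ^ 3
        from funext fun u => by ring, cubic_int]
    ring
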